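/- Let (Ω,Σ,μ) be a probability space, X a Banach space, and K ⊆ L¹(μ,X). If for every ε > 0 there exists a δS-set K_ε ⊆ L¹(μ,X) such that K ⊆ K_ε + ε B_{L¹(μ,X)}, then K is a δS-set. -/

import Mathlib

open MeasureTheory Filter Set ENNReal Pointwise
open scoped Topology

noncomputable section

def IsWeaklyCompact {X : Type*} [NormedAddCommGroup X] [NormedSpace ℝ X] (W : Set X) : Prop :=
  IsCompact (toWeakSpace ℝ X '' W)

def IsRelWeaklyCompact {X : Type*} [NormedAddCommGroup X] [NormedSpace ℝ X] (W : Set X) : Prop :=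
  IsCompact (closure (toWeakSpace ℝ X '' W))


section Aux
variable {X : Type*} [NormedAddCommGroup X] [NormedSpace ℝ X]

lemma topDualPairing_flip_injective : Function.Injective ⇑((topDualPairing ℝ X).flip) := by
  intro x y hxy
  rw [← sub_eq_zero]
  apply NormedSpace.eq_zero_of_forall_dual_eq_zero ℝ
  intro φ
  have := congrArg (fun ψ => ψ φ) hxy
  simp only [LinearMap.flip_apply, topDualPairing_apply] at this
  simp [map_sub, this]

lemma isWeaklyCompact_iInter_add_ball [CompleteSpace X]
    (W : ℕ → Set X) (hW : ∀ n, IsWeaklyCompact (W n)) :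
    IsWeaklyCompact (⋂ n, W n + Metric.closedBall (0:X) ((2:ℝ)⁻¹ ^ n)) := by
  set S := ⋂ n, W n + Metric.closedBall (0:X) ((2:ℝ)⁻¹ ^ n) with hSdef
  rw [IsWeaklyCompact, isCompact_iff_ultrafilter_le_nhds]
  intro G hG
  set e := toWeakSpace ℝ X with he
  set F : Ultrafilter X := G.map e.symm with hF
  have hGF : (G : Filter (WeakSpace ℝ X)) = Filter.map e F := by
    simp only [hF, Ultrafilter.coe_map, Filter.map_map]
    rw [show (⇑e ∘ ⇑e.symm) = id from funext fun x => e.apply_symm_apply x, Filter.map_id]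
  have hSF : S ∈ F := by
    have h1 : e '' S ∈ G := hG (mem_principal_self _)
    have : e.symm ⁻¹' S = e '' S := by
      ext x
      constructor
      · intro hx; exact ⟨e.symm x, hx, (e.apply_symm_apply x).symm⟩
      · rintro ⟨z, hz, rfl⟩; simpa using hz
    simpa [hF, Ultrafilter.mem_map, this] using h1
  -- choice of decompositions
  have key : ∀ (n : ℕ), ∀ x ∈ S, ∃ w ∈ W n,
      ∃ b ∈ Metric.closedBall (0:X) ((2:ℝ)⁻¹ ^ n), w + b = x := by
    intro n x hx
    have := Set.mem_iInter.mp hx n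
    rwa [Set.mem_add] at this
  choose! w hw b hb hwb using key
  -- limits of the w n along F inside W n
  have hyn : ∀ n : ℕ, ∃ y ∈ W n, Tendsto (fun x => e (w n x)) F (𝓝 (e y)) := by
    intro n
    have hmem : e '' W n ∈ F.map (fun x => e (w n x)) := by
      rw [Ultrafilter.mem_map]
      exact F.mem_of_superset hSF fun x hx => Set.mem_image_of_mem _ (hw n x hx)
    obtain ⟨a, ha, hle⟩ := (isCompact_iff_ultrafilter_le_nhds.mp (hW n))
      (F.map (fun x => e (w n x))) (le_principal_iff.mpr hmem)
    obtain ⟨y, hy, rfl⟩ := ha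
    exact ⟨y, hy, hle⟩
  choose y hyW hyT using hyn
  -- evaluation convergence
  have hev : ∀ (n : ℕ) (φ : StrongDual ℝ X),
      Tendsto (fun x => φ (w n x)) F (𝓝 (φ (y n))) := by
    intro n φ
    have := (WeakBilin.tendsto_iff_forall_eval_tendsto _ topDualPairing_flip_injective).mp
      (hyT n) φ
    exact this
  -- the y n are Cauchy
  have hyy : ∀ n m : ℕ, ‖y n - y m‖ ≤ (2:ℝ)⁻¹ ^ n + (2:ℝ)⁻¹ ^ m := by
    intro n m
    apply NormedSpace.norm_le_dual_bound ℝ _ (by positivity)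
    intro φ
    have h1 : Tendsto (fun x => |φ (w n x) - φ (w m x)|) F
        (𝓝 |φ (y n) - φ (y m)|) := ((hev n φ).sub (hev m φ)).abs
    have h2 : ∀ᶠ x in (F : Filter X),
        |φ (w n x) - φ (w m x)| ≤ ((2:ℝ)⁻¹ ^ n + (2:ℝ)⁻¹ ^ m) * ‖φ‖ := by
      filter_upwards [hSF] with x hx
      have hsub : w n x - w m x = b m x - b n x := by
        have h1 := hwb n x hx
        have h2 := hwb m x hx
        have h3 : w n x + b n x = w m x + b m x := by rw [h1, h2]
        rw [sub_eq_sub_iff_add_eq_add, h3, add_comm]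
      calc |φ (w n x) - φ (w m x)| = ‖φ (w n x - w m x)‖ := by
              rw [map_sub]; rfl
        _ ≤ ‖φ‖ * ‖w n x - w m x‖ := φ.le_opNorm _
        _ ≤ ‖φ‖ * ((2:ℝ)⁻¹ ^ n + (2:ℝ)⁻¹ ^ m) := by
              apply mul_le_mul_of_nonneg_left _ (norm_nonneg φ)
              rw [hsub]
              refine (norm_sub_le _ _).trans ?_
              have hbn := hb n x hx
              have hbm := hb m x hx
              rw [Metric.mem_closedBall, dist_zero_right] at hbn hbm
              linarith
        _ = ((2:ℝ)⁻¹ ^ n + (2:ℝ)⁻¹ ^ m) * ‖φ‖ := mul_comm _ _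
    have := le_of_tendsto h1 h2
    calc ‖φ (y n - y m)‖ = |φ (y n) - φ (y m)| := by rw [map_sub]; rfl
      _ ≤ ((2:ℝ)⁻¹ ^ n + (2:ℝ)⁻¹ ^ m) * ‖φ‖ := this
  have hcauchy : CauchySeq y := by
    apply cauchySeq_of_le_tendsto_0 (fun N => (2:ℝ)⁻¹ ^ N + (2:ℝ)⁻¹ ^ N)
    · intro n m N hn hm
      rw [dist_eq_norm]
      refine (hyy n m).trans ?_
      have h1 : (2:ℝ)⁻¹ ^ n ≤ (2:ℝ)⁻¹ ^ N :=
        pow_le_pow_of_le_one (by norm_num) (by norm_num) hn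
      have h2 : (2:ℝ)⁻¹ ^ m ≤ (2:ℝ)⁻¹ ^ N :=
        pow_le_pow_of_le_one (by norm_num) (by norm_num) hm
      linarith
    · have : Tendsto (fun N : ℕ => (2:ℝ)⁻¹ ^ N) atTop (𝓝 0) :=
        tendsto_pow_atTop_nhds_zero_of_lt_one (by norm_num) (by norm_num)
      simpa using this.add this
  obtain ⟨yl, hyl⟩ := cauchySeq_tendsto_of_complete hcauchy
  have hclose : ∀ n : ℕ, ‖y n - yl‖ ≤ (2:ℝ)⁻¹ ^ n := by
    intro n
    have h1 : Tendsto (fun m => ‖y n - y m‖) atTop (𝓝 ‖y n - yl‖) :=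
      (tendsto_const_nhds.sub hyl).norm
    have h2 : Tendsto (fun m : ℕ => (2:ℝ)⁻¹ ^ n + (2:ℝ)⁻¹ ^ m) atTop (𝓝 ((2:ℝ)⁻¹ ^ n)) := by
      simpa using (tendsto_const_nhds (x := (2:ℝ)⁻¹ ^ n)).add
        (tendsto_pow_atTop_nhds_zero_of_lt_one (by norm_num : (0:ℝ) ≤ 2⁻¹) (by norm_num))
    exact le_of_tendsto_of_tendsto' h1 h2 fun m => hyy n m
  have hylS : yl ∈ S := by
    rw [hSdef, Set.mem_iInter]
    intro n
    rw [Set.mem_add]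
    refine ⟨y n, hyW n, yl - y n, ?_, by abel⟩
    rw [Metric.mem_closedBall, dist_zero_right, norm_sub_rev]
    exact hclose n
  refine ⟨e yl, Set.mem_image_of_mem _ hylS, ?_⟩
  rw [hGF]
  -- prove Tendsto e F (𝓝 (e yl))
  have : Tendsto (fun x : X => e x) F (𝓝 (e yl)) := by
    refine (WeakBilin.tendsto_iff_forall_eval_tendsto _ topDualPairing_flip_injective).mpr ?_
    intro φ
    show Tendsto (fun x : X => φ x) F (𝓝 (φ yl))
    rw [Metric.tendsto_nhds]
    intro ε hε
    obtain ⟨n, hn⟩ : ∃ n : ℕ, (‖φ‖ + 1) * (2:ℝ)⁻¹ ^ n < ε / 3 := by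
      have : Tendsto (fun n : ℕ => (‖φ‖ + 1) * (2:ℝ)⁻¹ ^ n) atTop (𝓝 0) := by
        simpa using (tendsto_pow_atTop_nhds_zero_of_lt_one
          (by norm_num : (0:ℝ) ≤ 2⁻¹) (by norm_num)).const_mul (‖φ‖ + 1)
      exact ((this.eventually (gt_mem_nhds (by positivity))).exists)
    have hev' := (hev n φ)
    rw [Metric.tendsto_nhds] at hev'
    filter_upwards [hSF, hev' (ε/3) (by positivity)] with x hx hx2
    rw [Real.dist_eq]
    have hb' : ‖b n x‖ ≤ (2:ℝ)⁻¹ ^ n := by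
      have := hb n x hx
      rwa [Metric.mem_closedBall, dist_zero_right] at this
    have e1 : |φ x - φ (w n x)| ≤ ‖φ‖ * (2:ℝ)⁻¹ ^ n := by
      have : φ x - φ (w n x) = φ (b n x) := by
        rw [← map_sub]; congr 1
        exact (eq_sub_of_add_eq' (hwb n x hx)).symm
      rw [this]
      exact (φ.le_opNorm _).trans (mul_le_mul_of_nonneg_left hb' (norm_nonneg φ))
    have e2 : |φ (w n x) - φ (y n)| < ε/3 := by
      have := hx2; rwa [Real.dist_eq] at this
    have e3 : |φ (y n) - φ yl| ≤ ‖φ‖ * (2:ℝ)⁻¹ ^ n := by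
      rw [← map_sub]
      exact (φ.le_opNorm _).trans (mul_le_mul_of_nonneg_left (hclose n) (norm_nonneg φ))
    have hφn : ‖φ‖ * (2:ℝ)⁻¹ ^ n < ε / 3 := by
      refine lt_of_le_of_lt ?_ hn
      have : (0:ℝ) < (2:ℝ)⁻¹ ^ n := by positivity
      nlinarith [norm_nonneg φ]
    calc |φ x - φ yl| ≤ |φ x - φ (w n x)| + |φ (w n x) - φ (y n)| + |φ (y n) - φ yl| := by
          have := abs_sub_le (φ x) (φ (w n x)) (φ yl)
          have := abs_sub_le (φ (w n x)) (φ (y n)) (φ yl)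
          linarith [abs_sub_le (φ x) (φ (w n x)) (φ (y n) ), abs_sub_le (φ (w n x)) (φ (y n)) (φ yl), abs_sub_le (φ x) (φ (w n x)) (φ yl)]
      _ < ε := by linarith
  exact this

end Aux

variable {Ω : Type*} [MeasurableSpace Ω] {X : Type*} [NormedAddCommGroup X] [NormedSpace ℝ X]

/-- A set of functions in `L¹(μ,X)` is uniformly integrable if it is bounded and the integrals
of the norms over small sets are uniformly small. -/
def UnifIntegrableSet (μ : Measure Ω) (K : Set (Lp X 1 μ)) : Prop :=
  (∃ C : ℝ, ∀ f ∈ K, ‖f‖ ≤ C) ∧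
  ∀ ε : ℝ, 0 < ε → ∃ δ : ℝ, 0 < δ ∧ ∀ f ∈ K, ∀ A : Set Ω, μ A ≤ ENNReal.ofReal δ →
    ∫ ω in A, ‖(f : Ω → X) ω‖ ∂μ ≤ ε

/-- `K ⊆ L¹(μ,X)` is a δS-set if it is uniformly integrable and for every `δ > 0` there is a
weakly compact `W ⊆ X` with `μ (f ⁻¹' W) ≥ 1 - δ` for all `f ∈ K`. -/
def IsDeltaSSet (μ : Measure Ω) (K : Set (Lp X 1 μ)) : Prop :=
  UnifIntegrableSet μ K ∧
  ∀ δ : ℝ, 0 < δ → ∃ W : Set X, IsWeaklyCompact W ∧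
    ∀ f ∈ K, 1 - ENNReal.ofReal δ ≤ μ ((f : Ω → X) ⁻¹' W)

/-- A Banach space `X` has property (δSμ) if every relatively weakly compact subset of
`L¹(μ,X)` is a δS-set. -/
def DeltaSProp (μ : Measure Ω) (X : Type*) [NormedAddCommGroup X] [NormedSpace ℝ X] : Prop :=
  ∀ K : Set (Lp X 1 μ), IsRelWeaklyCompact K → IsDeltaSSet μ K

/-- If for every `ε > 0` there is a δS-set `Kε ⊆ L¹(μ,X)` with
`K ⊆ Kε + ε B_{L¹(μ,X)}`, then `K` is a δS-set. -/
theorem isDeltaSSet_of_perturbation (μ : Measure Ω) [IsProbabilityMeasure μ] [CompleteSpace X]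
    (K : Set (Lp X 1 μ))
    (h : ∀ ε : ℝ, 0 < ε → ∃ Kε : Set (Lp X 1 μ), IsDeltaSSet μ Kε ∧
      K ⊆ Kε + Metric.closedBall (0 : Lp X 1 μ) ε) :
    IsDeltaSSet μ K := by
  constructor
  · constructor
    · obtain ⟨K1, hK1, hsub⟩ := h 1 one_pos
      obtain ⟨C, hC⟩ := hK1.1.1
      refine ⟨C + 1, fun f hf => ?_⟩
      obtain ⟨g, hg, c, hc, rfl⟩ := Set.mem_add.mp (hsub hf)
      rw [Metric.mem_closedBall, dist_zero_right] at hc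
      calc ‖g + c‖ ≤ ‖g‖ + ‖c‖ := norm_add_le _ _
        _ ≤ C + 1 := add_le_add (hC g hg) hc
    · intro ε hε
      obtain ⟨Kh, hKh, hsub⟩ := h (ε/2) (by positivity)
      obtain ⟨δ, hδpos, hδ2⟩ := hKh.1.2 (ε/2) (by positivity)
      refine ⟨δ, hδpos, fun f hf A hA => ?_⟩
      obtain ⟨g, hg, c, hc, hfg⟩ := Set.mem_add.mp (hsub hf)
      rw [Metric.mem_closedBall, dist_zero_right] at hc
      have hae : (f : Ω → X) =ᵐ[μ] fun ω => (g : Ω → X) ω + (c : Ω → X) ω := by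
        have h1 := Lp.coeFn_add g c
        rw [← hfg]
        filter_upwards [h1] with ω hω using hω
      have hgint := L1.integrable_coeFn g
      have hcint := L1.integrable_coeFn c
      have h1 : ∫ ω in A, ‖(f : Ω → X) ω‖ ∂μ
          = ∫ ω in A, ‖(g : Ω → X) ω + (c : Ω → X) ω‖ ∂μ := by
        refine integral_congr_ae (ae_restrict_of_ae ?_)
        filter_upwards [hae] with ω hω using by rw [hω]
      have h2 : ∫ ω in A, ‖(g : Ω → X) ω + (c : Ω → X) ω‖ ∂μ
          ≤ ∫ ω in A, (‖(g : Ω → X) ω‖ + ‖(c : Ω → X) ω‖) ∂μ := by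
        refine integral_mono_ae ?_ ?_ ?_
        · have := (L1.integrable_coeFn f).norm.restrict (s := A)
          refine this.congr (ae_restrict_of_ae ?_)
          filter_upwards [hae] with ω hω using by rw [hω]
        · exact (hgint.norm.add hcint.norm).restrict
        · exact Eventually.of_forall fun ω => norm_add_le _ _
      have h3 : ∫ ω in A, (‖(g : Ω → X) ω‖ + ‖(c : Ω → X) ω‖) ∂μ
          = (∫ ω in A, ‖(g : Ω → X) ω‖ ∂μ) + ∫ ω in A, ‖(c : Ω → X) ω‖ ∂μ :=
        integral_add hgint.norm.restrict hcint.norm.restrict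
      have h4 : ∫ ω in A, ‖(g : Ω → X) ω‖ ∂μ ≤ ε / 2 := hδ2 g hg A hA
      have h5 : ∫ ω in A, ‖(c : Ω → X) ω‖ ∂μ ≤ ε / 2 := by
        have hle : ∫ ω in A, ‖(c : Ω → X) ω‖ ∂μ ≤ ∫ ω, ‖(c : Ω → X) ω‖ ∂μ :=
          setIntegral_le_integral hcint.norm (Eventually.of_forall fun ω => norm_nonneg _)
        have hnorm : ∫ ω, ‖(c : Ω → X) ω‖ ∂μ = ‖c‖ := by
          rw [L1.norm_def, ← ofReal_integral_norm_eq_lintegral_enorm hcint,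
            ENNReal.toReal_ofReal (integral_nonneg fun ω => norm_nonneg _)]
        linarith [hnorm ▸ hle]
      linarith [h1, h2, h3, h4, h5]
  · intro δ hδ
    have hchoice : ∀ n : ℕ, ∃ Kn : Set (Lp X 1 μ), IsDeltaSSet μ Kn ∧
        K ⊆ Kn + Metric.closedBall 0 (δ * 8⁻¹ * 4⁻¹ ^ n) := fun n => h _ (by positivity)
    choose Kn hKn hKsub using hchoice
    have hWn : ∀ n : ℕ, ∃ Wn : Set X, IsWeaklyCompact Wn ∧
        ∀ g ∈ Kn n, 1 - ENNReal.ofReal (δ * 2⁻¹ ^ n / 4) ≤ μ ((g : Ω → X) ⁻¹' Wn) :=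
      fun n => (hKn n).2 _ (by positivity)
    choose Wn hWcomp hWge using hWn
    set S : Set X := ⋂ n, Wn n + Metric.closedBall (0:X) ((2:ℝ)⁻¹ ^ n) with hSdef
    refine ⟨S, isWeaklyCompact_iInter_add_ball _ hWcomp, ?_⟩
    intro f hf
    have hdec : ∀ n : ℕ, ∃ g ∈ Kn n, ∃ c : Lp X 1 μ,
        ‖c‖ ≤ δ * 8⁻¹ * 4⁻¹ ^ n ∧ g + c = f := by
      intro n
      obtain ⟨g, hg, c, hc, hfc⟩ := Set.mem_add.mp (hKsub n hf)
      exact ⟨g, hg, c, by rwa [Metric.mem_closedBall, dist_zero_right] at hc, hfc⟩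
    choose g hgK c hcn hgc using hdec
    set badW : ℕ → Set Ω := fun n => ((g n : Ω → X) ⁻¹' (Wn n))ᶜ with hbadWdef
    set badB : ℕ → Set Ω := fun n => {ω | (2:ℝ)⁻¹ ^ n < ‖(c n : Ω → X) ω‖} with hbadBdef
    set N : ℕ → Set Ω := fun n =>
      {ω | ¬ (f : Ω → X) ω = (g n : Ω → X) ω + (c n : Ω → X) ω} with hNdef
    have hN : ∀ n, μ (N n) = 0 := by
      intro n
      have h1 := Lp.coeFn_add (g n) (c n)
      rw [hgc n] at h1
      rw [hNdef]
      rw [← ae_iff] at *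
      filter_upwards [h1] with ω hω using hω
    -- closedness and measurability infrastructure
    letI : MeasurableSpace X := borel X
    haveI : BorelSpace X := ⟨rfl⟩
    haveI hT2 : T2Space (WeakSpace ℝ X) :=
      (WeakBilin.isEmbedding topDualPairing_flip_injective).t2Space
    have hbadW : ∀ n, μ (badW n) ≤ ENNReal.ofReal (δ * 2⁻¹ ^ n / 4) := by
      intro n
      have hWclosed : IsClosed (Wn n) := by
        have h1 : IsClosed (toWeakSpace ℝ X '' Wn n) := (hWcomp n).isClosed
        have h2 : Wn n = toWeakSpaceCLM ℝ X ⁻¹' (toWeakSpace ℝ X '' Wn n) := by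
          rw [show (⇑(toWeakSpaceCLM ℝ X)) = ⇑(toWeakSpace ℝ X) from rfl]
          exact (Set.preimage_image_eq _ (toWeakSpace ℝ X).injective).symm
        rw [h2]
        exact h1.preimage (toWeakSpaceCLM ℝ X).continuous
      have hmeas : MeasurableSet ((g n : Ω → X) ⁻¹' (Wn n)) :=
        (Lp.stronglyMeasurable (g n)).measurable hWclosed.measurableSet
      have h1 := hWge n _ (hgK n)
      have h2 : μ (badW n) = 1 - μ ((g n : Ω → X) ⁻¹' (Wn n)) := by
        rw [hbadWdef]
        rw [measure_compl hmeas (measure_ne_top _ _), measure_univ]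
      rw [h2]
      calc 1 - μ ((g n : Ω → X) ⁻¹' (Wn n))
          ≤ 1 - (1 - ENNReal.ofReal (δ * 2⁻¹ ^ n / 4)) := tsub_le_tsub_left h1 1
        _ ≤ ENNReal.ofReal (δ * 2⁻¹ ^ n / 4) := by
            rw [tsub_le_iff_right]
            exact le_tsub_add.trans (le_of_eq (add_comm _ _))
    have hbadB : ∀ n, μ (badB n) ≤ ENNReal.ofReal (δ * 2⁻¹ ^ n / 4) := by
      intro n
      have hp : (0:ℝ) < (2:ℝ)⁻¹ ^ n := by positivity
      have hcheb := mul_meas_ge_le_lintegral₀ (μ := μ)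
        (f := fun ω => (‖(c n : Ω → X) ω‖₊ : ℝ≥0∞))
        ((Lp.aestronglyMeasurable (c n)).enorm) (ENNReal.ofReal ((2:ℝ)⁻¹ ^ n))
      have hlint : ∫⁻ ω, (‖(c n : Ω → X) ω‖₊ : ℝ≥0∞) ∂μ = ENNReal.ofReal ‖c n‖ := by
        show ∫⁻ ω, ‖(c n : Ω → X) ω‖ₑ ∂μ = _
        rw [← ofReal_integral_norm_eq_lintegral_enorm (L1.integrable_coeFn (c n))]
        congr 1
        rw [L1.norm_def, ← ofReal_integral_norm_eq_lintegral_enorm (L1.integrable_coeFn (c n)),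
          ENNReal.toReal_ofReal (integral_nonneg fun ω => norm_nonneg _)]
      have hsubset : badB n ⊆ {ω | ENNReal.ofReal ((2:ℝ)⁻¹ ^ n) ≤ (‖(c n : Ω → X) ω‖₊ : ℝ≥0∞)} := by
        intro ω hω
        rw [hbadBdef] at hω
        simp only [Set.mem_setOf_eq] at hω ⊢
        rw [show ((‖(c n : Ω → X) ω‖₊ : ℝ≥0∞)) = ENNReal.ofReal ‖(c n : Ω → X) ω‖ from (ofReal_norm _).symm]
        exact ENNReal.ofReal_le_ofReal hω.le
      have hpow : (2:ℝ)^n * (2:ℝ)⁻¹ ^ n = 1 := by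
        rw [← mul_pow]; norm_num
      have key : ENNReal.ofReal ((2:ℝ)^n) * ENNReal.ofReal ((2:ℝ)⁻¹ ^ n) = 1 := by
        rw [← ENNReal.ofReal_mul (by positivity), hpow, ENNReal.ofReal_one]
      calc μ (badB n)
          ≤ μ {ω | ENNReal.ofReal ((2:ℝ)⁻¹ ^ n) ≤ (‖(c n : Ω → X) ω‖₊ : ℝ≥0∞)} :=
            measure_mono hsubset
        _ = ENNReal.ofReal ((2:ℝ)^n) * (ENNReal.ofReal ((2:ℝ)⁻¹ ^ n)
              * μ {ω | ENNReal.ofReal ((2:ℝ)⁻¹ ^ n) ≤ (‖(c n : Ω → X) ω‖₊ : ℝ≥0∞)}) := by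
            rw [← mul_assoc, key, one_mul]
        _ ≤ ENNReal.ofReal ((2:ℝ)^n) * ENNReal.ofReal ‖c n‖ :=
            mul_le_mul_right (hcheb.trans hlint.le) _
        _ ≤ ENNReal.ofReal ((2:ℝ)^n) * ENNReal.ofReal (δ * 8⁻¹ * 4⁻¹ ^ n) :=
            mul_le_mul_right (ENNReal.ofReal_le_ofReal (hcn n)) _
        _ = ENNReal.ofReal ((2:ℝ)^n * (δ * 8⁻¹ * 4⁻¹ ^ n)) :=
            (ENNReal.ofReal_mul (by positivity)).symm
        _ ≤ ENNReal.ofReal (δ * 2⁻¹ ^ n / 4) := by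
            apply ENNReal.ofReal_le_ofReal
            have h4 : ((4:ℝ)⁻¹ : ℝ) ^ n = (2:ℝ)⁻¹ ^ n * (2:ℝ)⁻¹ ^ n := by
              rw [← mul_pow]; norm_num
            have heq : (2:ℝ)^n * (δ * 8⁻¹ * ((2:ℝ)⁻¹ ^ n * (2:ℝ)⁻¹ ^ n))
                = δ * (2:ℝ)⁻¹ ^ n / 8 := by
              linear_combination (δ * 8⁻¹ * (2:ℝ)⁻¹ ^ n) * hpow
            rw [h4, heq]
            have hb : 0 ≤ δ * (2:ℝ)⁻¹ ^ n := by positivity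
            linarith
    have hcover : ((f : Ω → X) ⁻¹' S)ᶜ ⊆ ⋃ n, (badW n ∪ badB n ∪ N n) := by
      intro ω hω
      by_contra hcon
      apply hω
      simp only [Set.mem_iUnion, not_exists, Set.mem_union, not_or] at hcon
      refine Set.mem_preimage.mpr (Set.mem_iInter.mpr fun n => ?_)
      obtain ⟨⟨h1, h2⟩, h3⟩ := hcon n
      have heq : (f : Ω → X) ω = (g n : Ω → X) ω + (c n : Ω → X) ω := not_not.mp h3
      have hgmem : (g n : Ω → X) ω ∈ Wn n := Set.not_notMem.mp h1
      have hcmem : ‖(c n : Ω → X) ω‖ ≤ (2:ℝ)⁻¹ ^ n := not_lt.mp h2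
      rw [Set.mem_add]
      exact ⟨(g n : Ω → X) ω, hgmem, (c n : Ω → X) ω,
        by rwa [Metric.mem_closedBall, dist_zero_right], heq.symm⟩
    have hsum : μ (((f : Ω → X) ⁻¹' S)ᶜ) ≤ ENNReal.ofReal δ := by
      refine (measure_mono hcover).trans ((measure_iUnion_le _).trans ?_)
      have hterm : ∀ n, μ (badW n ∪ badB n ∪ N n) ≤ ENNReal.ofReal (δ * 2⁻¹ ^ n / 2) := by
        intro n
        refine (measure_union_le _ _).trans ?_
        rw [hN n, add_zero]
        refine (measure_union_le _ _).trans ?_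
        refine (add_le_add (hbadW n) (hbadB n)).trans ?_
        rw [← ENNReal.ofReal_add (by positivity) (by positivity)]
        apply ENNReal.ofReal_le_ofReal
        linarith
      refine (ENNReal.tsum_le_tsum hterm).trans ?_
      have hsummable : Summable (fun n : ℕ => δ * 2⁻¹ ^ n / 2) :=
        ((summable_geometric_of_lt_one (by norm_num : (0:ℝ) ≤ 2⁻¹)
          (by norm_num)).mul_left (δ / 2)).congr (fun n => by ring)
      rw [← ENNReal.ofReal_tsum_of_nonneg (fun n => by positivity) hsummable]
      apply ENNReal.ofReal_le_ofReal
      have : ∑' n : ℕ, δ * 2⁻¹ ^ n / 2 = (δ / 2) * ∑' n : ℕ, (2⁻¹:ℝ) ^ n := by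
        rw [← tsum_mul_left]
        congr 1; ext n; ring
      rw [this, tsum_geometric_of_lt_one (by norm_num) (by norm_num)]
      norm_num
    rw [tsub_le_iff_right]
    calc (1:ℝ≥0∞) = μ Set.univ := measure_univ.symm
      _ = μ ((f : Ω → X) ⁻¹' S ∪ ((f : Ω → X) ⁻¹' S)ᶜ) := by rw [Set.union_compl_self]
      _ ≤ μ ((f : Ω → X) ⁻¹' S) + μ (((f : Ω → X) ⁻¹' S)ᶜ) := measure_union_le _ _
      _ ≤ μ ((f : Ω → X) ⁻¹' S) + ENNReal.ofReal δ := add_le_add_right hsum _
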